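/- For all v ∈ ℝ and l > 0 (with the value at v = 0 defined by continuity), the partial derivatives satisfy 0 ≤ ∂_v (v e^{vl}/sinh(vl)) ≤ 2 and -2 ≤ ∂_v (v e^{-vl}/sinh(vl)) ≤ 0. In particular, a(·,l) is nondecreasing and b(·,l) is nonincreasing in v. -/

import Mathlib

open Real

/-- The rate `a(v,l) = v e^{vl}/sinh(vl)`, extended by continuity to equal `1/l` at `v = 0`. -/
noncomputable def rateAext (l v : ℝ) : ℝ :=
  if v = 0 then 1 / l else v * Real.exp (v * l) / Real.sinh (v * l)

/-- The rate `b(v,l) = v e^{-vl}/sinh(vl)`, extended by continuity to equal `1/l` at `v = 0`. -/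
noncomputable def rateBext (l v : ℝ) : ℝ :=
  if v = 0 then 1 / l else v * Real.exp (-(v * l)) / Real.sinh (v * l)

open Filter

-- smooth formula for rateAext off 0
noncomputable def Fa (l v : ℝ) : ℝ := 2*v / (1 - Real.exp (-(2*l*v)))

noncomputable def Fa' (l v : ℝ) : ℝ :=
  (2*(1 - Real.exp (-(2*l*v))) - 2*v*(2*l*Real.exp (-(2*l*v)))) / (1 - Real.exp (-(2*l*v)))^2

lemma exp_ne_one_aux {s : ℝ} (hs : s ≠ 0) : 1 - Real.exp (-s) ≠ 0 := by
  intro h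
  have h1 : Real.exp (-s) = Real.exp 0 := by rw [Real.exp_zero]; linarith
  exact (neg_ne_zero.mpr hs) (Real.exp_injective h1)

lemma key_ineq (s : ℝ) :
    0 ≤ 1 - Real.exp (-s) - s * Real.exp (-s) ∧
      1 - Real.exp (-s) - s * Real.exp (-s) ≤ (1 - Real.exp (-s))^2 := by
  have h1 : s + 1 ≤ Real.exp s := Real.add_one_le_exp s
  have h2 : -s + 1 ≤ Real.exp (-s) := Real.add_one_le_exp (-s)
  have h3 : Real.exp s * Real.exp (-s) = 1 := by
    rw [← Real.exp_add]; simp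
  have h4 : (0:ℝ) < Real.exp (-s) := Real.exp_pos _
  have h5 : (0:ℝ) < Real.exp s := Real.exp_pos _
  constructor
  · nlinarith
  · nlinarith

lemma rateAext_eq_Fa {l : ℝ} (hl : 0 < l) {v : ℝ} (hv : v ≠ 0) :
    rateAext l v = Fa l v := by
  have hvl : v * l ≠ 0 := mul_ne_zero hv hl.ne'
  have hsinh : Real.sinh (v*l) ≠ 0 := by
    simpa [Real.sinh_ne_zero] using hvl
  have hE : Real.exp (v*l) ≠ 0 := (Real.exp_pos _).ne'
  have h2 : Real.exp (-(2*l*v)) = (Real.exp (v*l))⁻¹ ^ 2 := by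
    rw [← Real.exp_neg, ← Real.exp_nat_mul]
    ring_nf
  have hEsq : Real.exp (v*l) ^ 2 ≠ 1 := by
    rw [← Real.exp_nat_mul]
    rw [← Real.exp_zero]
    intro h
    have := Real.exp_injective h
    simp at this
    rcases this with h'|h'
    · exact hv h'
    · exact hl.ne' h'
  rw [rateAext, if_neg hv, Fa, Real.sinh_eq, h2]
  rw [Real.exp_neg]
  field_simp

lemma hasDerivAt_Fa {l : ℝ} (hl : 0 < l) {v : ℝ} (hv : v ≠ 0) :
    HasDerivAt (Fa l) (Fa' l v) v := by
  have hden : 1 - Real.exp (-(2*l*v)) ≠ 0 := by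
    have : 2*l*v ≠ 0 := by positivity
    exact exp_ne_one_aux this
  have h1 : HasDerivAt (fun v : ℝ => 2*v) 2 v := by
    simpa using (hasDerivAt_id v).const_mul 2
  have h2 : HasDerivAt (fun v : ℝ => 1 - Real.exp (-(2*l*v))) (2*l*Real.exp (-(2*l*v))) v := by
    have : HasDerivAt (fun v : ℝ => -(2*l*v)) (-(2*l)) v := by
      simpa using ((hasDerivAt_id v).const_mul (2*l)).fun_neg
    have := (Real.hasDerivAt_exp (-(2*l*v))).comp v this
    have h3 := ((hasDerivAt_const v (1:ℝ)).sub this)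
    exact h3.congr_deriv (by ring)
  have := h1.div h2 hden
  exact this

lemma Fa'_bounds {l : ℝ} (hl : 0 < l) {v : ℝ} (hv : v ≠ 0) :
    0 ≤ Fa' l v ∧ Fa' l v ≤ 2 := by
  set s := 2*l*v with hs
  have hsne : s ≠ 0 := by positivity
  have hden : 1 - Real.exp (-s) ≠ 0 := exp_ne_one_aux hsne
  have hdpos : 0 < (1 - Real.exp (-s))^2 := by positivity
  obtain ⟨hk1, hk2⟩ := key_ineq s
  have hnum : 2*(1 - Real.exp (-s)) - 2*v*(2*l*Real.exp (-s))
      = 2*(1 - Real.exp (-s) - s * Real.exp (-s)) := by rw [hs]; ring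
  rw [Fa', ← hs, hnum]
  constructor
  · positivity
  · rw [div_le_iff₀ hdpos]
    nlinarith

lemma hasDerivAt_rateAext {l : ℝ} (hl : 0 < l) {v : ℝ} (hv : v ≠ 0) :
    HasDerivAt (rateAext l) (Fa' l v) v := by
  apply (hasDerivAt_Fa hl hv).congr_of_eventuallyEq
  filter_upwards [isOpen_ne.mem_nhds hv] with x hx
  exact rateAext_eq_Fa hl hx

lemma continuous_rateAext {l : ℝ} (hl : 0 < l) : Continuous (rateAext l) := by
  rw [continuous_iff_continuousAt]
  intro v
  rcases eq_or_ne v 0 with rfl | hv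
  · rw [← continuousWithinAt_compl_self]
    have hG : Tendsto (fun v : ℝ => (Real.exp (-(2*l*v)) - 1)/(-(2*l*v))) (nhdsWithin 0 {(0:ℝ)}ᶜ)
        (nhds 1) := by
      have hslope : Tendsto (slope Real.exp 0) (nhdsWithin 0 {(0:ℝ)}ᶜ) (nhds 1) := by
        have := hasDerivAt_iff_tendsto_slope.mp (Real.hasDerivAt_exp 0)
        simpa using this
      have hcomp : Tendsto (fun v : ℝ => -(2*l*v)) (nhdsWithin 0 {(0:ℝ)}ᶜ)
          (nhdsWithin 0 {(0:ℝ)}ᶜ) := by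
        rw [tendsto_nhdsWithin_iff]
        constructor
        · apply Tendsto.mono_left _ nhdsWithin_le_nhds
          have : Continuous (fun v : ℝ => -(2*l*v)) := by continuity
          simpa using this.tendsto 0
        · filter_upwards [self_mem_nhdsWithin] with x hx
          simp only [Set.mem_compl_iff, Set.mem_singleton_iff] at hx ⊢
          intro h
          apply hx
          have h2l : (2*l) ≠ 0 := by positivity
          field_simp at h
          exact (mul_eq_zero.mp (neg_eq_zero.mp h)).resolve_left h2l
      have := hslope.comp hcomp
      apply this.congr
      intro x
      simp only [Function.comp, slope_def_field, Real.exp_zero, sub_zero]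
    have hFtend : Tendsto (rateAext l) (nhdsWithin 0 {(0:ℝ)}ᶜ) (nhds (rateAext l 0)) := by
      have h1l : rateAext l 0 = 1/l := by simp [rateAext]
      rw [h1l]
      have : Tendsto (fun v : ℝ => (1/l) / ((Real.exp (-(2*l*v)) - 1)/(-(2*l*v))))
          (nhdsWithin 0 {(0:ℝ)}ᶜ) (nhds (1/l)) := by
        have := (tendsto_const_nhds (x := (1:ℝ)/l) (f := nhdsWithin (0:ℝ) {(0:ℝ)}ᶜ)).div hG one_ne_zero
        rw [div_one] at this
        exact this
      apply this.congr'
      filter_upwards [self_mem_nhdsWithin] with x hx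
      simp only [Set.mem_compl_iff, Set.mem_singleton_iff] at hx
      rw [rateAext_eq_Fa hl hx, Fa]
      have h2lx : -(2*l*x) ≠ 0 := neg_ne_zero.mpr (by positivity)
      have hden' : 1 - Real.exp (-(2*l*x)) ≠ 0 := exp_ne_one_aux (by positivity)
      have hden : Real.exp (-(2*l*x)) - 1 ≠ 0 := by
        have := exp_ne_one_aux (show 2*l*x ≠ 0 by positivity)
        intro h; exact this (by linarith)
      field_simp
      rw [← one_div_neg_eq_neg_one_div, neg_sub]
    exact hFtend
  · exact (hasDerivAt_rateAext hl hv).continuousAt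

/-- general: continuous, differentiable off 0 with nonneg deriv, then monotone -/
lemma monotone_aux {f : ℝ → ℝ} {f' : ℝ → ℝ} (hc : Continuous f)
    (hd : ∀ v : ℝ, v ≠ 0 → HasDerivAt f (f' v) v)
    (hpos : ∀ v : ℝ, v ≠ 0 → 0 ≤ f' v) : Monotone f := by
  have hIic : MonotoneOn f (Set.Iic 0) := by
    apply monotoneOn_of_deriv_nonneg (convex_Iic 0) hc.continuousOn
    · intro x hx
      rw [interior_Iic] at hx
      exact (hd x (ne_of_lt hx)).differentiableAt.differentiableWithinAt
    · intro x hx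
      rw [interior_Iic] at hx
      rw [(hd x (ne_of_lt hx)).deriv]
      exact hpos x (ne_of_lt hx)
  have hIci : MonotoneOn f (Set.Ici 0) := by
    apply monotoneOn_of_deriv_nonneg (convex_Ici 0) hc.continuousOn
    · intro x hx
      rw [interior_Ici] at hx
      exact (hd x (ne_of_gt hx)).differentiableAt.differentiableWithinAt
    · intro x hx
      rw [interior_Ici] at hx
      rw [(hd x (ne_of_gt hx)).deriv]
      exact hpos x (ne_of_gt hx)
  intro x y hxy
  rcases le_total y 0 with hy | hy
  · exact hIic (le_trans hxy hy) hy hxy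
  · rcases le_total 0 x with hx | hx
    · exact hIci hx (le_trans hx hxy) hxy
    · exact le_trans (hIic hx Set.self_mem_Iic hx) (hIci Set.self_mem_Ici hy hy)

lemma deriv_nonneg_of_monotone {f : ℝ → ℝ} (hf : Monotone f) (x : ℝ) : 0 ≤ deriv f x := by
  by_cases h : DifferentiableAt ℝ f x
  · have := hasDerivAt_iff_tendsto_slope.mp h.hasDerivAt
    refine ge_of_tendsto this ?_
    filter_upwards [self_mem_nhdsWithin] with y hy
    simp only [Set.mem_compl_iff, Set.mem_singleton_iff] at hy
    rw [slope_def_field]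
    rcases lt_or_gt_of_ne hy with h1 | h1
    · apply div_nonneg_of_nonpos
      · simpa using hf h1.le
      · linarith
    · apply div_nonneg
      · simpa using hf h1.le
      · linarith
  · simp [deriv_zero_of_not_differentiableAt h]

lemma monotone_rateAext {l : ℝ} (hl : 0 < l) : Monotone (rateAext l) :=
  monotone_aux (continuous_rateAext hl) (fun v hv => hasDerivAt_rateAext hl hv)
    (fun v hv => (Fa'_bounds hl hv).1)

lemma monotone_twoSub {l : ℝ} (hl : 0 < l) : Monotone (fun v => 2*v - rateAext l v) := by
  apply monotone_aux (f' := fun v => 2 - Fa' l v)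
  · exact (continuous_const.mul continuous_id).sub (continuous_rateAext hl)
  · intro v hv
    have h1 : HasDerivAt (fun v : ℝ => 2*v) 2 v := by
      simpa using (hasDerivAt_id v).const_mul 2
    exact h1.sub (hasDerivAt_rateAext hl hv)
  · intro v hv
    have := (Fa'_bounds hl hv).2
    linarith

lemma derivA_bounds {l : ℝ} (hl : 0 < l) (v : ℝ) :
    0 ≤ deriv (rateAext l) v ∧ deriv (rateAext l) v ≤ 2 := by
  refine ⟨deriv_nonneg_of_monotone (monotone_rateAext hl) v, ?_⟩
  by_cases h : DifferentiableAt ℝ (rateAext l) v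
  · have h2 := deriv_nonneg_of_monotone (monotone_twoSub hl) v
    have h1 : DifferentiableAt ℝ (fun v : ℝ => 2*v) v := by
      apply Differentiable.differentiableAt
      exact (differentiable_id.const_mul 2)
    rw [deriv_fun_sub h1 h] at h2
    have h1' : HasDerivAt (fun v : ℝ => 2*v) 2 v := by
      simpa using (hasDerivAt_id v).const_mul 2
    rw [h1'.deriv] at h2
    linarith
  · simp [deriv_zero_of_not_differentiableAt h]

lemma rateB_eq {l : ℝ} : rateBext l = fun v => rateAext l (-v) := by
  funext v
  rcases eq_or_ne v 0 with rfl | hv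
  · simp [rateBext, rateAext]
  · rw [rateBext, rateAext, if_neg hv, if_neg (neg_ne_zero.mpr hv)]
    rw [show -v * l = -(v*l) by ring, Real.sinh_neg]
    field_simp

theorem rate_deriv_bounds' (l : ℝ) (hl : 0 < l) :
    (∀ v : ℝ, 0 ≤ deriv (rateAext l) v ∧ deriv (rateAext l) v ≤ 2) ∧
    (∀ v : ℝ, -2 ≤ deriv (rateBext l) v ∧ deriv (rateBext l) v ≤ 0) ∧
    Monotone (rateAext l) ∧ Antitone (rateBext l) := by
  refine ⟨derivA_bounds hl, ?_, monotone_rateAext hl, ?_⟩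
  · intro v
    have hB : deriv (rateBext l) v = -deriv (rateAext l) (-v) := by
      rw [rateB_eq]
      exact deriv_comp_neg (rateAext l) v
    obtain ⟨ha, hb⟩ := derivA_bounds hl (-v)
    rw [hB]
    constructor <;> linarith
  · rw [rateB_eq]
    intro x y hxy
    exact monotone_rateAext hl (neg_le_neg hxy)

/-- The crossing rates satisfy `0 ≤ ∂_v a(v,l) ≤ 2` and `-2 ≤ ∂_v b(v,l) ≤ 0`; in particular
`a(·,l)` is nondecreasing and `b(·,l)` is nonincreasing. -/
theorem rate_deriv_bounds (l : ℝ) (hl : 0 < l) :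
    (∀ v : ℝ, 0 ≤ deriv (rateAext l) v ∧ deriv (rateAext l) v ≤ 2) ∧
    (∀ v : ℝ, -2 ≤ deriv (rateBext l) v ∧ deriv (rateBext l) v ≤ 0) ∧
    Monotone (rateAext l) ∧ Antitone (rateBext l) := by
  exact rate_deriv_bounds' l hl
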